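/- arXiv:2306.14989 — 2 statements merged into one kernel-verified Lean document; each statement's English description precedes it below -/
import Mathlib

section
/- Let ⟨A⟩ and ⟨B⟩ be numerical semigroups with Frobenius numbers F_A and F_B, and let a ∈ ⟨A⟩, b ∈ ⟨B⟩ with gcd(a,b) = 1, a,b ≥ 2. Then the Frobenius number of the gluing H = ⟨bA, aB⟩ is F_H = b·F_A + a·F_B + ab. -/
/-- F is the Frobenius number of the submonoid S of ℕ: every natural number strictly
larger than F lies in S, and F is either -1 or a natural number not in S. -/
def IsFrobenius (S : AddSubmonoid ℕ) (F : ℤ) : Prop :=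
  (∀ n : ℕ, n ∉ S → (n : ℤ) ≤ F) ∧ (F = -1 ∨ ∃ n : ℕ, (n : ℤ) = F ∧ n ∉ S)

lemma mem_gluing_iff (A B : Set ℕ) (a b : ℕ) (n : ℕ) :
    n ∈ AddSubmonoid.closure ((fun x => b * x) '' A ∪ (fun x => a * x) '' B) ↔
    ∃ x ∈ AddSubmonoid.closure A, ∃ y ∈ AddSubmonoid.closure B, n = b * x + a * y := by
  rw [AddSubmonoid.closure_union, AddSubmonoid.mem_sup]
  have h1 : AddSubmonoid.closure ((fun x => b * x) '' A)
      = (AddSubmonoid.closure A).map (AddMonoidHom.mulLeft b) := by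
    rw [AddMonoidHom.map_mclosure]; rfl
  have h2 : AddSubmonoid.closure ((fun x => a * x) '' B)
      = (AddSubmonoid.closure B).map (AddMonoidHom.mulLeft a) := by
    rw [AddMonoidHom.map_mclosure]; rfl
  rw [h1, h2]
  constructor
  · rintro ⟨y, hy, z, hz, h⟩
    rw [AddSubmonoid.mem_map] at hy hz
    obtain ⟨x, hx, rfl⟩ := hy
    obtain ⟨y', hy', rfl⟩ := hz
    exact ⟨x, hx, y', hy', h.symm⟩
  · rintro ⟨x, hx, y, hy, rfl⟩
    exact ⟨b * x, AddSubmonoid.mem_map.2 ⟨x, hx, rfl⟩,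
      a * y, AddSubmonoid.mem_map.2 ⟨y, hy, rfl⟩, rfl⟩

/-- The Frobenius number of the gluing ⟨bA, aB⟩ of two numerical semigroups ⟨A⟩ and ⟨B⟩
with gcd(a,b) = 1, a, b ≥ 2, is b·F_A + a·F_B + a·b. -/
theorem frobenius_of_gluing (A B : Set ℕ)
    (hA : {n : ℕ | n ∉ AddSubmonoid.closure A}.Finite)
    (hB : {n : ℕ | n ∉ AddSubmonoid.closure B}.Finite)
    (FA FB : ℤ) (hFA : IsFrobenius (AddSubmonoid.closure A) FA)
    (hFB : IsFrobenius (AddSubmonoid.closure B) FB)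
    (a b : ℕ) (ha : a ∈ AddSubmonoid.closure A) (hb : b ∈ AddSubmonoid.closure B)
    (hgcd : Nat.gcd a b = 1) (ha2 : 2 ≤ a) (hb2 : 2 ≤ b) :
    IsFrobenius
      (AddSubmonoid.closure ((fun x => b * x) '' A ∪ (fun x => a * x) '' B))
      (b * FA + a * FB + a * b) := by
  have hFA1 : (-1 : ℤ) ≤ FA := by rcases hFA.2 with h | ⟨m, hm, _⟩ <;> omega
  have hFB1 : (-1 : ℤ) ≤ FB := by rcases hFB.2 with h | ⟨m, hm, _⟩ <;> omega
  have ha0 : (0 : ℤ) < (a : ℤ) := by exact_mod_cast Nat.lt_of_lt_of_le Nat.zero_lt_two ha2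
  have hcop : IsCoprime (a : ℤ) (b : ℤ) := Nat.isCoprime_iff_coprime.2 hgcd
  constructor
  · -- every n not in the gluing satisfies n ≤ F
    intro n hn
    by_contra hlt
    push_neg at hlt
    apply hn
    rw [mem_gluing_iff]
    -- Bezout
    obtain ⟨u, v, huv⟩ := hcop
    -- n = b * (n*v) + a * (n*u)
    have hrep : (n : ℤ) = b * (n * v) + a * (n * u) := by
      have : (n : ℤ) * (u * a + v * b) = n := by rw [huv, mul_one]
      linarith [this]
    set u' : ℤ := (n : ℤ) * v with hu'
    set x : ℤ := FA + 1 + (u' - (FA + 1)) % a with hx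
    have hmod0 : 0 ≤ (u' - (FA + 1)) % a := Int.emod_nonneg _ (by omega)
    have hmodlt : (u' - (FA + 1)) % a < a := Int.emod_lt_of_pos _ ha0
    have hxlb : FA < x := by omega
    have hxub : x ≤ FA + a := by omega
    have hdvdux : (a : ℤ) ∣ u' - x := by
      have h1 : (a : ℤ) ∣ (u' - (FA + 1)) - (u' - (FA + 1)) % a :=
        Int.dvd_self_sub_of_emod_eq rfl
      have : u' - x = (u' - (FA + 1)) - (u' - (FA + 1)) % a := by rw [hx]; ring
      rw [this]; exact h1
    have hdvd : (a : ℤ) ∣ (n : ℤ) - b * x := by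
      have : (n : ℤ) - b * x = b * (u' - x) + a * ((n : ℤ) * u) := by
        linear_combination hrep
      rw [this]
      exact dvd_add (Dvd.dvd.mul_left hdvdux b) (Dvd.intro _ rfl)
    set y : ℤ := ((n : ℤ) - b * x) / a with hy
    have hay : (a : ℤ) * y = (n : ℤ) - b * x := by
      rw [hy, mul_comm]; exact Int.ediv_mul_cancel hdvd
    have hylb : FB < y := by
      have h1 : (a : ℤ) * y > a * FB := by
        have hbx : (b : ℤ) * x ≤ b * (FA + a) := by
          apply mul_le_mul_of_nonneg_left hxub (by positivity)
        rw [hay]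
        nlinarith [hlt]
      exact lt_of_mul_lt_mul_left (by linarith) (le_of_lt ha0)
    have hx0 : 0 ≤ x := by omega
    have hy0 : 0 ≤ y := by omega
    refine ⟨x.toNat, ?_, y.toNat, ?_, ?_⟩
    · by_contra hxmem
      have := hFA.1 x.toNat hxmem
      rw [Int.toNat_of_nonneg hx0] at this
      omega
    · by_contra hymem
      have := hFB.1 y.toNat hymem
      rw [Int.toNat_of_nonneg hy0] at this
      omega
    · have : (n : ℤ) = b * x.toNat + a * y.toNat := by
        rw [Int.toNat_of_nonneg hx0, Int.toNat_of_nonneg hy0]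
        omega
      exact_mod_cast this
  · -- F itself is not in the gluing
    right
    have hF0 : (0 : ℤ) ≤ b * FA + a * FB + a * b := by nlinarith
    refine ⟨(b * FA + a * FB + a * b).toNat, Int.toNat_of_nonneg hF0, ?_⟩
    intro hmem
    rw [mem_gluing_iff] at hmem
    obtain ⟨x, hx, y, hy, heq⟩ := hmem
    have heqZ : (b : ℤ) * x + a * y = b * FA + a * FB + a * b := by
      have := congrArg (Nat.cast : ℕ → ℤ) heq
      rw [Int.toNat_of_nonneg hF0] at this
      push_cast at this
      linarith
    have hdvd : (a : ℤ) ∣ (x : ℤ) - FA := by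
      apply hcop.dvd_of_dvd_mul_left
      have : (b : ℤ) * ((x : ℤ) - FA) = a * (FB + b - y) := by linarith
      exact ⟨FB + b - y, by linarith [this]⟩
    obtain ⟨k, hk⟩ := hdvd
    have hyk : (y : ℤ) = FB + b * (1 - k) := by
      have h1 : (a : ℤ) * (FB + b - y) = b * ((x : ℤ) - FA) := by linarith
      rw [hk] at h1
      have h2 : (a : ℤ) * (FB + b - y) = a * (b * k) := by linarith [h1]
      have h3 : FB + (b : ℤ) - y = b * k := by
        have := mul_left_cancel₀ (ne_of_gt ha0) h2
        linarith
      linarith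
    rcases le_or_gt k 0 with hk0 | hk1
    · -- x ≤ FA, contradiction with FA ∉ SA
      have hxFA : (x : ℤ) ≤ FA := by nlinarith
      have hFAnn : (0 : ℤ) ≤ FA := le_trans (Int.ofNat_nonneg x) hxFA
      rcases hFA.2 with h | ⟨m, hm, hmns⟩
      · omega
      · apply hmns
        have hmk : m = x + a * (-k).toNat := by
          have : (m : ℤ) = x + a * (-k).toNat := by
            rw [Int.toNat_of_nonneg (by omega)]
            rw [hm]
            linarith [hk]
          exact_mod_cast this
        rw [hmk]
        exact AddSubmonoid.add_mem _ hx (by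
          have : a * (-k).toNat = (-k).toNat • a := by simp [smul_eq_mul, mul_comm]
          rw [this]; exact AddSubmonoid.nsmul_mem _ ha _)
    · -- y ≤ FB, contradiction with FB ∉ SB
      have hyFB : (y : ℤ) ≤ FB := by nlinarith
      have hFBnn : (0 : ℤ) ≤ FB := le_trans (Int.ofNat_nonneg y) hyFB
      rcases hFB.2 with h | ⟨m, hm, hmns⟩
      · omega
      · apply hmns
        have hmk : m = y + b * (k - 1).toNat := by
          have : (m : ℤ) = y + b * (k - 1).toNat := by
            rw [Int.toNat_of_nonneg (by omega)]
            rw [hm]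
            linarith [hyk]
          exact_mod_cast this
        rw [hmk]
        exact AddSubmonoid.add_mem _ hy (by
          have : b * (k - 1).toNat = (k - 1).toNat • b := by simp [smul_eq_mul, mul_comm]
          rw [this]; exact AddSubmonoid.nsmul_mem _ hb _)
end

section
/- Let H = ⟨a_1,…,a_h⟩ be a numerical semigroup, a = c_1 a_1 + ⋯ + c_h a_h ∈ H with c_i ∈ ℕ, and b ∈ ℕ with gcd(a,b) = 1. Set H' = ⟨a, b a_1, …, b a_h⟩. If k[[H]] ≅ k[[x_1,…,x_h]]/I_H, then k[[H']] ≅ k[[x_1,…,x_h,x_{h+1}]]/(I_H + (f)) where f = x_{h+1}^b − x_1^{c_1}⋯x_h^{c_h}. -/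
set_option synthInstance.maxHeartbeats 1000000
set_option maxHeartbeats 1000000

open Finsupp Finset

namespace GluingAux

variable {h : ℕ} {k : Type} [Field k]

/-- pack an exponent on `Fin h` and a last exponent into an exponent on `Fin (h+1)` -/
noncomputable def packF (eb : Fin h →₀ ℕ) (j : ℕ) : Fin (h + 1) →₀ ℕ :=
  Finsupp.embDomain ⟨Fin.castSucc, Fin.castSucc_injective h⟩ eb +
    Finsupp.single (Fin.last h) j

noncomputable def resF (e : Fin (h + 1) →₀ ℕ) : Fin h →₀ ℕ :=
  Finsupp.comapDomain Fin.castSucc e ((Fin.castSucc_injective h).injOn)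

lemma resF_def (e : Fin (h + 1) →₀ ℕ) :
    Finsupp.comapDomain Fin.castSucc e ((Fin.castSucc_injective h).injOn) = resF e := rfl

@[simp] lemma resF_apply (e : Fin (h + 1) →₀ ℕ) (i : Fin h) : resF e i = e i.castSucc := rfl

@[simp] lemma packF_castSucc (eb : Fin h →₀ ℕ) (j : ℕ) (i : Fin h) :
    packF eb j i.castSucc = eb i := by
  have h1 : Finsupp.single (Fin.last h) j i.castSucc = 0 :=
    Finsupp.single_eq_of_ne' (Fin.castSucc_lt_last i).ne'
  have h2 : Finsupp.embDomain ⟨Fin.castSucc, Fin.castSucc_injective h⟩ eb i.castSucc = eb i :=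
    Finsupp.embDomain_apply_self _ _ _
  simp [packF, h1, h2]

@[simp] lemma packF_last (eb : Fin h →₀ ℕ) (j : ℕ) : packF eb j (Fin.last h) = j := by
  have h2 : Finsupp.embDomain ⟨Fin.castSucc, Fin.castSucc_injective h⟩ eb (Fin.last h) = 0 := by
    apply Finsupp.embDomain_notin_range
    rintro ⟨i, hi⟩
    exact (Fin.castSucc_lt_last i).ne hi
  simp [packF, h2]

@[simp] lemma resF_packF (eb : Fin h →₀ ℕ) (j : ℕ) : resF (packF eb j) = eb := by
  ext i; simp

lemma packF_resF (e : Fin (h + 1) →₀ ℕ) : packF (resF e) (e (Fin.last h)) = e := by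
  ext s
  induction s using Fin.lastCases with
  | last => simp
  | cast i => simp

/-! ### finsum helpers -/

lemma finsum_eq_sum_range {M : Type} [AddCommMonoid M] (F : ℕ → M) (K : ℕ)
    (hK : ∀ p, K ≤ p → F p = 0) : ∑ᶠ p, F p = ∑ p ∈ Finset.range K, F p := by
  apply finsum_eq_sum_of_support_subset
  intro p hp
  simp only [Finset.coe_range, Set.mem_Iio]
  by_contra hc
  exact hp (hK p (le_of_not_gt hc))

lemma finsum_shift {M : Type} [AddCommMonoid M] (F : ℕ → M) (K : ℕ)
    (hK : ∀ p, K ≤ p → F p = 0) : ∑ᶠ p, F p = F 0 + ∑ᶠ p, F (p + 1) := by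
  rw [finsum_eq_sum_range F (K + 1) (fun p hp => hK p (le_trans (Nat.le_succ K) hp)),
    finsum_eq_sum_range (fun p => F (p + 1)) K (fun p hp => hK (p + 1) (le_trans hp (Nat.le_succ p))),
    Finset.sum_range_succ']
  exact add_comm _ _

open scoped Classical in
lemma finsum_point {α M : Type} [AddCommMonoid M] (S : Set α) (e₀ : α) (v : α → M)
    (hv : ∀ e, e ≠ e₀ → v e = 0) :
    ∑ᶠ e ∈ S, v e = if e₀ ∈ S then v e₀ else 0 := by
  rw [finsum_mem_def, finsum_eq_single _ e₀ (fun x hx => by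
    simp only [Set.indicator_apply]
    split_ifs with hmem
    · exact hv x hx
    · rfl)]
  simp [Set.indicator_apply]

/-! ### weights -/

variable (a : Fin h → ℕ) (b aa : ℕ)

/-- weight of an exponent -/
def wt {m : ℕ} (w : Fin m → ℕ) (e : Fin m →₀ ℕ) : ℕ := ∑ i, e i * w i

/-- the extended weight vector -/
def wS : Fin (h + 1) → ℕ := Fin.lastCases aa (fun i => b * a i)

lemma wS_castSucc (i : Fin h) : wS a b aa i.castSucc = b * a i := by
  simp [wS]

lemma wS_last : wS a b aa (Fin.last h) = aa := by simp [wS]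

lemma wt_wS (e : Fin (h + 1) →₀ ℕ) :
    wt (wS a b aa) e = (∑ i : Fin h, e i.castSucc * (b * a i)) + e (Fin.last h) * aa := by
  rw [wt, Fin.sum_univ_castSucc]
  simp [wS_castSucc, wS_last]

lemma wt_packF (eb : Fin h →₀ ℕ) (j : ℕ) :
    wt (wS a b aa) (packF eb j) = b * wt a eb + j * aa := by
  rw [wt_wS]
  simp only [packF_castSucc, packF_last]
  congr 1
  rw [wt, Finset.mul_sum]
  exact Finset.sum_congr rfl fun i _ => by ring

lemma wt_add {m : ℕ} (w : Fin m → ℕ) (e e' : Fin m →₀ ℕ) :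
    wt w (e + e') = wt w e + wt w e' := by
  simp [wt, Finsupp.add_apply, add_mul, Finset.sum_add_distrib]

/-! ### the finsets of exponents of given weight -/

noncomputable def wtFinset {m : ℕ} (w : Fin m → ℕ) (n : ℕ) : Finset (Fin m →₀ ℕ) :=
  (Finset.Iic (equivFunOnFinite.symm fun _ => n)).filter (fun e => wt w e = n)

lemma mem_wtFinset {m : ℕ} {w : Fin m → ℕ} (hw : ∀ i, 0 < w i) {n : ℕ} {e : Fin m →₀ ℕ} :
    e ∈ wtFinset w n ↔ wt w e = n := by
  rw [wtFinset, Finset.mem_filter]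
  constructor
  · exact fun h => h.2
  · intro hwt
    refine ⟨Finset.mem_Iic.2 ?_, hwt⟩
    intro i
    have h1 : e i * w i ≤ n := by
      rw [← hwt, wt]
      exact Finset.single_le_sum (f := fun j => e j * w j) (fun j _ => Nat.zero_le _)
        (Finset.mem_univ i)
    have h2 : e i ≤ e i * w i := Nat.le_mul_of_pos_right _ (hw i)
    simpa using le_trans h2 h1

lemma wt_set_eq {m : ℕ} {w : Fin m → ℕ} (hw : ∀ i, 0 < w i) (n : ℕ) :
    {e : Fin m →₀ ℕ | wt w e = n} = ↑(wtFinset w n) := by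
  ext e; simp [mem_wtFinset hw]

lemma finsum_wt {M : Type} [AddCommMonoid M] {m : ℕ} {w : Fin m → ℕ} (hw : ∀ i, 0 < w i) (n : ℕ)
    (F : (Fin m →₀ ℕ) → M) :
    ∑ᶠ e ∈ {e : Fin m →₀ ℕ | wt w e = n}, F e = ∑ e ∈ wtFinset w n, F e := by
  rw [wt_set_eq hw, finsum_mem_coe_finset]

/-! ### the fundamental constructions -/

open MvPowerSeries

variable {k : Type} [Field k]

noncomputable def Gr (cF : Fin h →₀ ℕ) (b r : ℕ) (g : MvPowerSeries (Fin (h + 1)) k) :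
    MvPowerSeries (Fin h) k :=
  fun eb => ∑ᶠ q : ℕ, if q • cF ≤ eb then
    MvPowerSeries.coeff (packF (eb - q • cF) (q * b + r)) g else 0

lemma coeff_Gr (cF : Fin h →₀ ℕ) (b r : ℕ) (g : MvPowerSeries (Fin (h + 1)) k)
    (eb : Fin h →₀ ℕ) :
    MvPowerSeries.coeff eb (Gr cF b r g) = ∑ᶠ q : ℕ, if q • cF ≤ eb then
      MvPowerSeries.coeff (packF (eb - q • cF) (q * b + r)) g else 0 := rfl

noncomputable def Ng (cF : Fin h →₀ ℕ) (b : ℕ) (g : MvPowerSeries (Fin (h + 1)) k) :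
    MvPowerSeries (Fin (h + 1)) k :=
  fun e => if e (Fin.last h) < b then
    MvPowerSeries.coeff (resF e) (Gr cF b (e (Fin.last h)) g) else 0

lemma coeff_Ng (cF : Fin h →₀ ℕ) (b : ℕ) (g : MvPowerSeries (Fin (h + 1)) k)
    (e : Fin (h + 1) →₀ ℕ) :
    MvPowerSeries.coeff e (Ng cF b g) = if e (Fin.last h) < b then
      MvPowerSeries.coeff (resF e) (Gr cF b (e (Fin.last h)) g) else 0 := rfl

noncomputable def Qg (cF : Fin h →₀ ℕ) (b : ℕ) (g : MvPowerSeries (Fin (h + 1)) k) :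
    MvPowerSeries (Fin (h + 1)) k :=
  fun e => ∑ᶠ p : ℕ, if p • cF ≤ resF e then
    MvPowerSeries.coeff (packF (resF e - p • cF) ((p + 1) * b + e (Fin.last h))) g else 0

lemma coeff_Qg (cF : Fin h →₀ ℕ) (b : ℕ) (g : MvPowerSeries (Fin (h + 1)) k)
    (e : Fin (h + 1) →₀ ℕ) :
    MvPowerSeries.coeff e (Qg cF b g) = ∑ᶠ p : ℕ, if p • cF ≤ resF e then
      MvPowerSeries.coeff (packF (resF e - p • cF) ((p + 1) * b + e (Fin.last h))) g else 0 := rfl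

lemma smul_le_bound {cF : Fin h →₀ ℕ} {i₀ : Fin h} (hc : 0 < cF i₀) {q : ℕ} {eb : Fin h →₀ ℕ}
    (hq : q • cF ≤ eb) : q ≤ eb i₀ := by
  have := hq i₀
  simp only [Finsupp.smul_apply, smul_eq_mul] at this
  calc q ≤ q * cF i₀ := Nat.le_mul_of_pos_right _ hc
    _ ≤ eb i₀ := this

lemma le_packF_iff {cF : Fin h →₀ ℕ} {e : Fin (h + 1) →₀ ℕ} :
    packF cF 0 ≤ e ↔ cF ≤ resF e := by
  rw [Finsupp.le_def, Finsupp.le_def]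
  constructor
  · intro H i; simpa using H i.castSucc
  · intro H s
    induction s using Fin.lastCases with
    | last => simp
    | cast i => simpa using H i

/-- The division identity: `g = Ng + (X_last^b - X^cF) * Qg`. -/
lemma div_identity (cF : Fin h →₀ ℕ) {i₀ : Fin h} (hc : 0 < cF i₀) (b : ℕ) (hb : 0 < b)
    (g : MvPowerSeries (Fin (h + 1)) k) :
    g = Ng cF b g +
      (MvPowerSeries.monomial (Finsupp.single (Fin.last h) b) 1 -
        MvPowerSeries.monomial (packF cF 0) 1) * Qg cF b g := by
  ext e
  set j := e (Fin.last h) with hj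
  set eb := resF e with heb
  set F : ℕ → k := fun p => if p • cF ≤ eb then
    MvPowerSeries.coeff (packF (eb - p • cF) (p * b + j)) g else 0 with hF
  have hFbd : ∀ p, eb i₀ + 1 ≤ p → F p = 0 := by
    intro p hp
    rw [hF]
    simp only
    rw [if_neg]
    intro hle
    have := smul_le_bound hc hle
    omega
  have hF0 : F 0 = MvPowerSeries.coeff e g := by
    rw [hF]
    simp only [zero_smul, zero_le, if_true, tsub_zero, zero_mul, zero_add]
    rw [heb, hj, packF_resF]
  -- auxiliary subtraction facts
  have hres1 : resF (e - Finsupp.single (Fin.last h) b) = eb := by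
    ext i
    rw [heb]
    simp [Finsupp.tsub_apply, Finsupp.single_eq_of_ne' (Fin.castSucc_lt_last i).ne']
  have hlast1 : (e - Finsupp.single (Fin.last h) b) (Fin.last h) = j - b := by
    simp [Finsupp.tsub_apply, hj]
  have hres2 : resF (e - packF cF 0) = eb - cF := by
    ext i
    rw [heb]
    simp [Finsupp.tsub_apply]
  have hlast2 : (e - packF cF 0) (Fin.last h) = j := by
    simp [Finsupp.tsub_apply, hj]
  have hsucc : ∀ p : ℕ, ((p + 1) • cF ≤ eb ↔ cF ≤ eb ∧ p • cF ≤ eb - cF) := by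
    intro p
    simp only [Finsupp.le_def, Finsupp.smul_apply, smul_eq_mul, Finsupp.tsub_apply]
    constructor
    · intro H
      constructor
      · intro i
        have h1 := H i
        have hmul : (p + 1) * cF i = p * cF i + cF i := by ring
        omega
      · intro i
        have h1 := H i
        have hmul : (p + 1) * cF i = p * cF i + cF i := by ring
        omega
    · rintro ⟨H1, H2⟩ i
      have h1 := H1 i
      have h2 := H2 i
      have hmul : (p + 1) * cF i = p * cF i + cF i := by ring
      omega
  have hsub2 : ∀ p : ℕ, (eb - cF) - p • cF = eb - (p + 1) • cF := by
    intro p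
    ext i
    simp only [Finsupp.tsub_apply, Finsupp.smul_apply, smul_eq_mul]
    have : (p + 1) * cF i = p * cF i + cF i := by ring
    omega
  -- compute the second summand's coefficient
  have hXb : MvPowerSeries.coeff e
      (MvPowerSeries.monomial (Finsupp.single (Fin.last h) b) 1 * Qg cF b g) =
      if b ≤ j then ∑ᶠ p, F p else 0 := by
    rw [MvPowerSeries.coeff_monomial_mul]
    simp only [Finsupp.single_le_iff]
    by_cases hbj : b ≤ j
    · rw [if_pos hbj, if_pos hbj, one_mul, coeff_Qg, hres1, hlast1]
      apply finsum_congr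
      intro p
      by_cases hp : p • cF ≤ eb
      · rw [if_pos hp, hF]
        simp only [if_pos hp]
        have harith : ∀ x y : ℕ, y ≤ x → (p + 1) * y + (x - y) = p * y + x := by
          intro x y hxy
          have hmul : (p + 1) * y = p * y + y := by ring
          omega
        rw [harith j b hbj]
      · rw [if_neg hp, hF]; simp only [if_neg hp]
    · rw [if_neg hbj, if_neg hbj]
  have hM : MvPowerSeries.coeff e
      (MvPowerSeries.monomial (packF cF 0) 1 * Qg cF b g) = ∑ᶠ p, F (p + 1) := by
    rw [MvPowerSeries.coeff_monomial_mul]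
    simp only [le_packF_iff, ← heb]
    by_cases hce : cF ≤ eb
    · rw [if_pos hce, one_mul, coeff_Qg, hres2, hlast2]
      apply finsum_congr
      intro p
      by_cases hp : p • cF ≤ eb - cF
      · rw [if_pos hp, hF]
        simp only [if_pos ((hsucc p).2 ⟨hce, hp⟩), hsub2 p]
      · rw [if_neg hp, hF]
        simp only
        rw [if_neg]
        intro hcon
        exact hp ((hsucc p).1 hcon).2
    · rw [if_neg hce]
      symm
      apply finsum_eq_zero_of_forall_eq_zero
      intro p
      rw [hF]
      simp only
      rw [if_neg]
      intro hcon
      exact hce ((hsucc p).1 hcon).1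
  rw [map_add, sub_mul, map_sub, hXb, hM, coeff_Ng, ← hj, ← heb]
  have hshift := finsum_shift F (eb i₀ + 1) hFbd
  by_cases hbj : b ≤ j
  · rw [if_neg (by omega : ¬ j < b), if_pos hbj]
    rw [hshift, hF0]
    ring
  · rw [if_pos (by omega : j < b), if_neg hbj, coeff_Gr]
    have : (∑ᶠ q : ℕ, if q • cF ≤ eb then
        MvPowerSeries.coeff (packF (eb - q • cF) (q * b + j)) g else 0) = ∑ᶠ p, F p := rfl
    rw [this, hshift, hF0]
    ring

lemma Ng_eq (cF : Fin h →₀ ℕ) (b : ℕ) (g : MvPowerSeries (Fin (h + 1)) k)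
    (ι : MvPowerSeries (Fin h) k →+* MvPowerSeries (Fin (h + 1)) k)
    (hι : ∀ (f : MvPowerSeries (Fin h) k) (e : Fin (h + 1) →₀ ℕ),
      MvPowerSeries.coeff e (ι f) =
        if e (Fin.last h) = 0 then
          MvPowerSeries.coeff
            (Finsupp.comapDomain Fin.castSucc e ((Fin.castSucc_injective h).injOn)) f
        else 0) :
    Ng cF b g = ∑ r ∈ Finset.range b,
      MvPowerSeries.monomial (Finsupp.single (Fin.last h) r) 1 * ι (Gr cF b r g) := by
  ext e
  rw [map_sum, coeff_Ng]
  have hterm : ∀ r ∈ Finset.range b,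
      MvPowerSeries.coeff e
        (MvPowerSeries.monomial (Finsupp.single (Fin.last h) r) 1 * ι (Gr cF b r g)) =
      if e (Fin.last h) = r then MvPowerSeries.coeff (resF e) (Gr cF b r g) else 0 := by
    intro r _hr
    rw [MvPowerSeries.coeff_monomial_mul]
    by_cases h1 : Finsupp.single (Fin.last h) r ≤ e
    · rw [if_pos h1, one_mul, hι, resF_def]
      have hl : (e - Finsupp.single (Fin.last h) r) (Fin.last h) = e (Fin.last h) - r := by
        simp [Finsupp.tsub_apply]
      have hres : resF (e - Finsupp.single (Fin.last h) r) = resF e := by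
        ext i
        simp [Finsupp.tsub_apply, Finsupp.single_eq_of_ne' (Fin.castSucc_lt_last i).ne']
      rw [hres]
      have h1' : r ≤ e (Fin.last h) := Finsupp.single_le_iff.1 h1
      by_cases h2 : e (Fin.last h) = r
      · rw [if_pos (by rw [hl]; omega), if_pos h2]
      · rw [if_neg (by rw [hl]; omega), if_neg h2]
    · rw [if_neg h1, if_neg (fun hc => h1 (by rw [← hc]; exact Finsupp.single_le_iff.2 le_rfl))]
  rw [Finset.sum_congr rfl hterm, Finset.sum_ite_eq (Finset.range b) (e (Fin.last h))]
  simp [Finset.mem_range]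

lemma finsum_wt' {M : Type} [AddCommMonoid M] {m : ℕ} {w : Fin m → ℕ} (hw : ∀ i, 0 < w i)
    (n : ℕ) (F : (Fin m →₀ ℕ) → M) :
    ∑ᶠ e ∈ {e : Fin m →₀ ℕ | ∑ i, e i * w i = n}, F e = ∑ e ∈ wtFinset w n, F e :=
  finsum_wt hw n F

lemma wS_pos {a : Fin h → ℕ} (hapos : ∀ i, 0 < a i) {b aa : ℕ} (hb : 0 < b) (haa0 : 0 < aa) :
    ∀ i, 0 < wS a b aa i := by
  intro i
  induction i using Fin.lastCases with
  | last => simpa [wS_last] using haa0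
  | cast i => rw [wS_castSucc]; exact Nat.mul_pos hb (hapos i)

lemma finsum_wS {M : Type} [AddCommMonoid M] {a : Fin h → ℕ} (hapos : ∀ i, 0 < a i) {b aa : ℕ}
    (hb : 0 < b) (haa0 : 0 < aa) (n : ℕ) (F : (Fin (h + 1) →₀ ℕ) → M) :
    ∑ᶠ e ∈ {e : Fin (h + 1) →₀ ℕ |
        (∑ i : Fin h, e i.castSucc * (b * a i)) + e (Fin.last h) * aa = n}, F e =
      ∑ e ∈ wtFinset (wS a b aa) n, F e := by
  have hset : {e : Fin (h + 1) →₀ ℕ |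
      (∑ i : Fin h, e i.castSucc * (b * a i)) + e (Fin.last h) * aa = n} =
      {e : Fin (h + 1) →₀ ℕ | wt (wS a b aa) e = n} := by
    ext e
    simp only [Set.mem_setOf_eq, wt_wS]
  rw [hset, wt_set_eq (wS_pos hapos hb haa0), finsum_mem_coe_finset]

/-- The key computation: if `φ' g = 0` then the coefficients `Gr` are in the kernel of `φ`. -/
lemma Gr_ker {a : Fin h → ℕ} (hapos : ∀ i, 0 < a i) {c : Fin h → ℕ} {aa b : ℕ}
    (haa : aa = ∑ i, c i * a i) (hgcd : Nat.gcd aa b = 1) (hb : 0 < b) (haa0 : 0 < aa)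
    {i₀ : Fin h} (hci : 0 < c i₀)
    (φ : MvPowerSeries (Fin h) k →+* PowerSeries k)
    (hφ : ∀ (f : MvPowerSeries (Fin h) k) (n : ℕ),
      PowerSeries.coeff n (φ f) =
        ∑ᶠ e ∈ {e : Fin h →₀ ℕ | ∑ i, e i * a i = n}, MvPowerSeries.coeff e f)
    (φ' : MvPowerSeries (Fin (h + 1)) k →+* PowerSeries k)
    (hφ' : ∀ (f : MvPowerSeries (Fin (h + 1)) k) (n : ℕ),
      PowerSeries.coeff n (φ' f) =
        ∑ᶠ e ∈ {e : Fin (h + 1) →₀ ℕ |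
            (∑ i : Fin h, e i.castSucc * (b * a i)) + e (Fin.last h) * aa = n},
          MvPowerSeries.coeff e f)
    (g : MvPowerSeries (Fin (h + 1)) k) (hg : φ' g = 0) (r : ℕ) (hr : r < b) :
    φ (Gr (equivFunOnFinite.symm c) b r g) = 0 := by
  classical
  set cF : Fin h →₀ ℕ := equivFunOnFinite.symm c with hcFdef
  have hcF : ∀ i, cF i = c i := fun i => rfl
  have hwtq : ∀ (q : ℕ) , wt a (q • cF) = q * aa := by
    intro q
    rw [wt, haa, Finset.mul_sum]
    apply Finset.sum_congr rfl
    intro i _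
    simp only [Finsupp.smul_apply, smul_eq_mul, hcF]
    ring
  ext n
  rw [hφ, finsum_wt' hapos, map_zero]
  have hGr_sum : ∀ eb ∈ wtFinset a n, MvPowerSeries.coeff eb (Gr cF b r g) =
      ∑ q ∈ Finset.range (n + 1), (if q • cF ≤ eb then
        MvPowerSeries.coeff (packF (eb - q • cF) (q * b + r)) g else 0) := by
    intro eb hmem
    rw [coeff_Gr]
    apply finsum_eq_sum_range
    intro q hq'
    rw [if_neg]
    intro hle
    have h1 : q ≤ eb i₀ := smul_le_bound (show 0 < cF i₀ by rw [hcF]; exact hci) hle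
    have h2 : eb i₀ * a i₀ ≤ n := by
      have := (mem_wtFinset hapos).1 hmem
      rw [← this, wt]
      exact Finset.single_le_sum (f := fun j => eb j * a j) (fun j _ => Nat.zero_le _)
        (Finset.mem_univ i₀)
    have h3 : eb i₀ ≤ eb i₀ * a i₀ := Nat.le_mul_of_pos_right _ (hapos i₀)
    omega
  rw [Finset.sum_congr rfl hGr_sum]
  -- the key fact for elements of the target finset
  have hkey : ∀ e ∈ wtFinset (wS a b aa) (b * n + r * aa),
      e (Fin.last h) = (e (Fin.last h) / b) * b + r ∧
      wt a (resF e) + (e (Fin.last h) / b) * aa = n := by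
    intro e he
    have hwe0 := (mem_wtFinset (wS_pos hapos hb haa0)).1 he
    rw [wt_wS] at hwe0
    have hsplit : (∑ i : Fin h, e i.castSucc * (b * a i)) = b * wt a (resF e) := by
      rw [wt, Finset.mul_sum]
      apply Finset.sum_congr rfl
      intro i _
      rw [resF_apply]
      ring
    rw [hsplit] at hwe0
    set W := wt a (resF e) with hW
    set j := e (Fin.last h) with hjd
    -- j ≡ r mod b
    have h₂ : j * aa + b * W ≡ r * aa + b * n [MOD b] := by
      have : j * aa + b * W = r * aa + b * n := by omega
      rw [this]
    have h₁ : b * W ≡ b * n [MOD b] :=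
      ((Nat.modEq_zero_iff_dvd).2 ⟨W, rfl⟩).trans ((Nat.modEq_zero_iff_dvd).2 ⟨n, rfl⟩).symm
    have hmod : j * aa ≡ r * aa [MOD b] := Nat.ModEq.add_right_cancel h₁ h₂
    have hcanc : j ≡ r [MOD b] :=
      Nat.ModEq.cancel_right_of_coprime (by rwa [Nat.gcd_comm] at hgcd) hmod
    have hjr : j % b = r := by
      have h4 : j % b = r % b := hcanc
      rw [h4, Nat.mod_eq_of_lt hr]
    have hdm := Nat.div_add_mod j b
    have hcomm : b * (j / b) = (j / b) * b := Nat.mul_comm _ _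
    have hq : j = (j / b) * b + r := by omega
    constructor
    · exact hq
    · -- W + (j/b) * aa = n
      have h5 : ((j / b) * b + r) * aa = b * ((j / b) * aa) + r * aa := by ring
      rw [hq] at hwe0
      rw [h5] at hwe0
      have h7 : b * (W + (j / b) * aa) = b * n := by rw [Nat.mul_add]; omega
      exact Nat.eq_of_mul_eq_mul_left hb h7
  -- now the reindexing
  have hbij : (∑ x ∈ (wtFinset a n ×ˢ Finset.range (n + 1)).filter
        (fun x : (Fin h →₀ ℕ) × ℕ => x.2 • cF ≤ x.1),
        MvPowerSeries.coeff (packF (x.1 - x.2 • cF) (x.2 * b + r)) g) =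
      ∑ e ∈ wtFinset (wS a b aa) (b * n + r * aa), MvPowerSeries.coeff e g := by
    apply Finset.sum_nbij' (i := fun x : (Fin h →₀ ℕ) × ℕ => packF (x.1 - x.2 • cF) (x.2 * b + r))
      (j := fun e => (resF e + (e (Fin.last h) / b) • cF, e (Fin.last h) / b))
    · -- hi
      intro x hx
      rw [Finset.mem_filter, Finset.mem_product] at hx
      obtain ⟨⟨hx1, _hx2⟩, hcond⟩ := hx
      have hwx : wt a x.1 = n := (mem_wtFinset hapos).1 hx1
      have hXq : wt a (x.1 - x.2 • cF) + x.2 * aa = n := by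
        rw [← hwtq x.2, ← wt_add, tsub_add_cancel_of_le hcond, hwx]
      rw [mem_wtFinset (wS_pos hapos hb haa0), wt_packF]
      set X := wt a (x.1 - x.2 • cF)
      have h1 : b * X + b * (x.2 * aa) = b * n := by rw [← Nat.mul_add, hXq]
      have h2 : (x.2 * b + r) * aa = b * (x.2 * aa) + r * aa := by ring
      omega
    · -- hj
      intro e he
      obtain ⟨hq, hX⟩ := hkey e he
      rw [Finset.mem_filter, Finset.mem_product]
      refine ⟨⟨?_, ?_⟩, ?_⟩
      · rw [mem_wtFinset hapos, wt_add, hwtq]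
        exact hX
      · rw [Finset.mem_range]
        have h1 : e (Fin.last h) / b ≤ (e (Fin.last h) / b) * aa :=
          Nat.le_mul_of_pos_right _ haa0
        omega
      · exact le_add_self
    · -- left inverse
      intro x hx
      rw [Finset.mem_filter, Finset.mem_product] at hx
      obtain ⟨⟨_hx1, _hx2⟩, hcond⟩ := hx
      have hlast : (packF (x.1 - x.2 • cF) (x.2 * b + r)) (Fin.last h) = x.2 * b + r :=
        packF_last _ _
      have hdiv : (x.2 * b + r) / b = x.2 := by
        rw [mul_comm, Nat.mul_add_div hb, Nat.div_eq_of_lt hr, add_zero]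
      rw [hlast, hdiv, resF_packF, tsub_add_cancel_of_le hcond]
    · -- right inverse
      intro e he
      obtain ⟨hq, _hX⟩ := hkey e he
      simp only
      rw [add_tsub_cancel_right, ← hq, packF_resF]
    · -- values
      intro x hx
      rfl
  calc ∑ eb ∈ wtFinset a n, ∑ q ∈ Finset.range (n + 1), (if q • cF ≤ eb then
        MvPowerSeries.coeff (packF (eb - q • cF) (q * b + r)) g else 0)
      = ∑ x ∈ wtFinset a n ×ˢ Finset.range (n + 1), (if x.2 • cF ≤ x.1 then
        MvPowerSeries.coeff (packF (x.1 - x.2 • cF) (x.2 * b + r)) g else 0) := by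
        rw [Finset.sum_product]
    _ = ∑ x ∈ (wtFinset a n ×ˢ Finset.range (n + 1)).filter
        (fun x : (Fin h →₀ ℕ) × ℕ => x.2 • cF ≤ x.1),
        MvPowerSeries.coeff (packF (x.1 - x.2 • cF) (x.2 * b + r)) g := by
        rw [Finset.sum_filter]
    _ = ∑ e ∈ wtFinset (wS a b aa) (b * n + r * aa), MvPowerSeries.coeff e g := hbij
    _ = ∑ᶠ e ∈ {e : Fin (h + 1) →₀ ℕ |
            (∑ i : Fin h, e i.castSucc * (b * a i)) + e (Fin.last h) * aa = b * n + r * aa},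
          MvPowerSeries.coeff e g := (finsum_wS hapos hb haa0 _ _).symm
    _ = PowerSeries.coeff (b * n + r * aa) (φ' g) := (hφ' g _).symm
    _ = 0 := by rw [hg, map_zero]

lemma wt_wS_eq {a : Fin h → ℕ} {b aa : ℕ} (e : Fin (h + 1) →₀ ℕ) :
    wt (wS a b aa) e = b * wt a (resF e) + e (Fin.last h) * aa := by
  rw [wt_wS]
  congr 1
  rw [wt, Finset.mul_sum]
  apply Finset.sum_congr rfl
  intro i _
  rw [resF_apply]
  ring

/-- `φ' ∘ ι` kills the kernel of `φ`. -/
lemma phi'_iota {a : Fin h → ℕ} (hapos : ∀ i, 0 < a i) {b aa : ℕ} (hb : 0 < b) (haa0 : 0 < aa)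
    (φ : MvPowerSeries (Fin h) k →+* PowerSeries k)
    (hφ : ∀ (f : MvPowerSeries (Fin h) k) (n : ℕ),
      PowerSeries.coeff n (φ f) =
        ∑ᶠ e ∈ {e : Fin h →₀ ℕ | ∑ i, e i * a i = n}, MvPowerSeries.coeff e f)
    (φ' : MvPowerSeries (Fin (h + 1)) k →+* PowerSeries k)
    (hφ' : ∀ (f : MvPowerSeries (Fin (h + 1)) k) (n : ℕ),
      PowerSeries.coeff n (φ' f) =
        ∑ᶠ e ∈ {e : Fin (h + 1) →₀ ℕ |
            (∑ i : Fin h, e i.castSucc * (b * a i)) + e (Fin.last h) * aa = n},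
          MvPowerSeries.coeff e f)
    (ι : MvPowerSeries (Fin h) k →+* MvPowerSeries (Fin (h + 1)) k)
    (hι : ∀ (f : MvPowerSeries (Fin h) k) (e : Fin (h + 1) →₀ ℕ),
      MvPowerSeries.coeff e (ι f) =
        if e (Fin.last h) = 0 then
          MvPowerSeries.coeff
            (Finsupp.comapDomain Fin.castSucc e ((Fin.castSucc_injective h).injOn)) f
        else 0)
    (g : MvPowerSeries (Fin h) k) (hg : φ g = 0) : φ' (ι g) = 0 := by
  classical
  ext n
  rw [hφ', finsum_wS hapos hb haa0, map_zero]
  have hterm : ∀ e ∈ wtFinset (wS a b aa) n, MvPowerSeries.coeff e (ι g) =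
      if e (Fin.last h) = 0 then MvPowerSeries.coeff (resF e) g else 0 := by
    intro e _
    rw [hι, resF_def]
  rw [Finset.sum_congr rfl hterm, ← Finset.sum_filter]
  by_cases hdvd : b ∣ n
  · obtain ⟨m, rfl⟩ := hdvd
    have hstep : (∑ e ∈ (wtFinset (wS a b aa) (b * m)).filter (fun e => e (Fin.last h) = 0),
        MvPowerSeries.coeff (resF e) g) = ∑ eb ∈ wtFinset a m, MvPowerSeries.coeff eb g := by
      apply Finset.sum_nbij' (i := fun e => resF e) (j := fun eb => packF eb 0)
      · intro e he
        rw [Finset.mem_filter] at he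
        obtain ⟨he1, he2⟩ := he
        have hw := (mem_wtFinset (wS_pos hapos hb haa0)).1 he1
        rw [wt_wS_eq, he2, zero_mul, add_zero] at hw
        rw [mem_wtFinset hapos]
        exact Nat.eq_of_mul_eq_mul_left hb hw
      · intro eb heb
        rw [Finset.mem_filter]
        constructor
        · rw [mem_wtFinset (wS_pos hapos hb haa0), wt_wS_eq, resF_packF, packF_last,
            zero_mul, add_zero, (mem_wtFinset hapos).1 heb]
        · exact packF_last _ _
      · intro e he
        rw [Finset.mem_filter] at he
        rw [← he.2, packF_resF]
      · intro eb _
        rw [resF_packF]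
      · intro e _
        rfl
    rw [hstep, ← finsum_wt' hapos, ← hφ, hg, map_zero]
  · apply Finset.sum_eq_zero
    intro e he
    exfalso
    rw [Finset.mem_filter] at he
    obtain ⟨he1, he2⟩ := he
    have hw := (mem_wtFinset (wS_pos hapos hb haa0)).1 he1
    rw [wt_wS_eq, he2, zero_mul, add_zero] at hw
    exact hdvd ⟨_, hw.symm⟩

/-- `φ'` identifies monomials of the same weight. -/
lemma phi'_monomial_sub {a : Fin h → ℕ} (hapos : ∀ i, 0 < a i) {b aa : ℕ} (hb : 0 < b)
    (haa0 : 0 < aa)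
    (φ' : MvPowerSeries (Fin (h + 1)) k →+* PowerSeries k)
    (hφ' : ∀ (f : MvPowerSeries (Fin (h + 1)) k) (n : ℕ),
      PowerSeries.coeff n (φ' f) =
        ∑ᶠ e ∈ {e : Fin (h + 1) →₀ ℕ |
            (∑ i : Fin h, e i.castSucc * (b * a i)) + e (Fin.last h) * aa = n},
          MvPowerSeries.coeff e f)
    (e₀ e₀' : Fin (h + 1) →₀ ℕ) (hwt : wt (wS a b aa) e₀ = wt (wS a b aa) e₀') :
    φ' (MvPowerSeries.monomial e₀ 1) = φ' (MvPowerSeries.monomial e₀' 1) := by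
  classical
  ext n
  rw [hφ', hφ', finsum_wS hapos hb haa0, finsum_wS hapos hb haa0]
  simp only [MvPowerSeries.coeff_monomial]
  rw [Finset.sum_ite_eq' (wtFinset (wS a b aa) n) e₀ (fun _ => (1 : k)),
    Finset.sum_ite_eq' (wtFinset (wS a b aa) n) e₀' (fun _ => (1 : k))]
  simp only [mem_wtFinset (wS_pos hapos hb haa0), hwt]

/-- degenerate situations kill `φ'`, contradiction. -/
lemma degen {a : Fin h → ℕ} {b aa : ℕ}
    (φ' : MvPowerSeries (Fin (h + 1)) k →+* PowerSeries k)
    (hφ' : ∀ (f : MvPowerSeries (Fin (h + 1)) k) (n : ℕ),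
      PowerSeries.coeff n (φ' f) =
        ∑ᶠ e ∈ {e : Fin (h + 1) →₀ ℕ |
            (∑ i : Fin h, e i.castSucc * (b * a i)) + e (Fin.last h) * aa = n},
          MvPowerSeries.coeff e f)
    (s : Fin (h + 1))
    (hw : (∑ i : Fin h, (Finsupp.single s 1) i.castSucc * (b * a i)) +
      (Finsupp.single s 1) (Fin.last h) * aa = 0) : False := by
  classical
  have hXcoeff : ∀ n, PowerSeries.coeff n (φ' (MvPowerSeries.X s)) =
      if n = 0 then 1 else 0 := by
    intro n
    rw [hφ']
    rw [finsum_point _ (Finsupp.single s 1) _ (fun e he => by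
      rw [MvPowerSeries.coeff_X, if_neg he])]
    have hmem : (Finsupp.single s 1 ∈ {e : Fin (h + 1) →₀ ℕ |
        (∑ i : Fin h, e i.castSucc * (b * a i)) + e (Fin.last h) * aa = n}) ↔ (0 = n) := by
      rw [Set.mem_setOf_eq, hw]
    rw [MvPowerSeries.coeff_X, if_pos rfl]
    by_cases hn : n = 0
    · rw [if_pos (hmem.2 hn.symm), if_pos hn]
    · rw [if_neg (fun hc => hn (hmem.1 hc).symm), if_neg hn]
  have hX0 : φ' ((1 : MvPowerSeries (Fin (h+1)) k) - MvPowerSeries.X s) = 0 := by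
    ext n
    rw [map_sub, map_one, map_sub, hXcoeff, map_zero, PowerSeries.coeff_one]
    split_ifs <;> ring
  have hcc : MvPowerSeries.constantCoeff ((1 : MvPowerSeries (Fin (h+1)) k) - MvPowerSeries.X s) = ((1 : kˣ) : k) := by
    rw [map_sub, map_one, MvPowerSeries.constantCoeff_X, sub_zero, Units.val_one]
  have hunit : ((1 : MvPowerSeries (Fin (h+1)) k) - MvPowerSeries.X s) *
      MvPowerSeries.invOfUnit ((1 : MvPowerSeries (Fin (h+1)) k) - MvPowerSeries.X s) 1 = 1 :=
    MvPowerSeries.mul_invOfUnit _ _ hcc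
  have hcontra := congrArg φ' hunit
  rw [map_mul, hX0, zero_mul, map_one] at hcontra
  exact zero_ne_one hcontra

lemma prod_X_pow (c : Fin h → ℕ) :
    (∏ i : Fin h, (MvPowerSeries.X i.castSucc : MvPowerSeries (Fin (h + 1)) k) ^ c i) =
    MvPowerSeries.monomial (packF (equivFunOnFinite.symm c) 0) 1 := by
  classical
  have key : ∀ s : Finset (Fin h),
      (∏ i ∈ s, (MvPowerSeries.X i.castSucc : MvPowerSeries (Fin (h + 1)) k) ^ c i) =
      MvPowerSeries.monomial (∑ i ∈ s, Finsupp.single i.castSucc (c i)) 1 := by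
    intro s
    induction s using Finset.induction with
    | empty => simp
    | insert _ _ hx ih =>
      rw [Finset.prod_insert hx, Finset.sum_insert hx, ih, MvPowerSeries.X_pow_eq,
        MvPowerSeries.monomial_mul_monomial, one_mul]
  rw [key Finset.univ]
  suffices harg : (∑ i : Fin h, Finsupp.single i.castSucc (c i)) =
      packF (equivFunOnFinite.symm c) (0 : ℕ) by rw [harg]
  ext s
  rw [Finsupp.finset_sum_apply]
  induction s using Fin.lastCases with
  | last =>
    rw [packF_last]
    apply Finset.sum_eq_zero
    intro i _
    exact Finsupp.single_eq_of_ne' (Fin.castSucc_lt_last i).ne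
  | cast i =>
    rw [packF_castSucc]
    simp [Finsupp.single_apply, Fin.castSucc_inj]

end GluingAux

open GluingAux in
/-- Cohen presentation of a gluing: let H = ⟨a_1,...,a_h⟩, aa = ∑ c_i a_i ∈ H, and b
coprime to aa, H' = ⟨aa, b a_1, ..., b a_h⟩.  Let φ (resp. φ') be the substitution
x_i ↦ t^{a_i} (resp. x_i ↦ t^{b a_i}, x_{h+1} ↦ t^{aa}), characterized on
coefficients, and ι the inclusion of power series rings.  With I_H = ker φ, the
quotient of k[[x_1,...,x_{h+1}]] by (I_H, x_{h+1}^b - ∏ x_i^{c_i}) is isomorphic to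
k[[H']] = range φ'. -/
theorem gluing_presentation (k : Type) [Field k] (h : ℕ) (a : Fin h → ℕ)
    (hapos : ∀ i, 0 < a i)
    (hH : {n : ℕ | n ∉ AddSubmonoid.closure (Set.range a)}.Finite)
    (c : Fin h → ℕ) (aa : ℕ) (haa : aa = ∑ i, c i * a i)
    (b : ℕ) (hgcd : Nat.gcd aa b = 1)
    (φ : MvPowerSeries (Fin h) k →+* PowerSeries k)
    (hφ : ∀ (f : MvPowerSeries (Fin h) k) (n : ℕ),
      PowerSeries.coeff n (φ f) =
        ∑ᶠ e ∈ {e : Fin h →₀ ℕ | ∑ i, e i * a i = n}, MvPowerSeries.coeff e f)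
    (φ' : MvPowerSeries (Fin (h + 1)) k →+* PowerSeries k)
    (hφ' : ∀ (f : MvPowerSeries (Fin (h + 1)) k) (n : ℕ),
      PowerSeries.coeff n (φ' f) =
        ∑ᶠ e ∈ {e : Fin (h + 1) →₀ ℕ |
            (∑ i : Fin h, e i.castSucc * (b * a i)) + e (Fin.last h) * aa = n},
          MvPowerSeries.coeff e f)
    (ι : MvPowerSeries (Fin h) k →+* MvPowerSeries (Fin (h + 1)) k)
    (hι : ∀ (f : MvPowerSeries (Fin h) k) (e : Fin (h + 1) →₀ ℕ),
      MvPowerSeries.coeff e (ι f) =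
        if e (Fin.last h) = 0 then
          MvPowerSeries.coeff
            (Finsupp.comapDomain Fin.castSucc e ((Fin.castSucc_injective h).injOn)) f
        else 0) :
    Nonempty ((MvPowerSeries (Fin (h + 1)) k ⧸
        (Ideal.map ι (RingHom.ker φ) ⊔
          Ideal.span {(MvPowerSeries.X (Fin.last h) : MvPowerSeries (Fin (h + 1)) k) ^ b -
            ∏ i : Fin h,
              (MvPowerSeries.X i.castSucc : MvPowerSeries (Fin (h + 1)) k) ^ c i})) ≃+*
      ↥φ'.range) := by
  classical
  set f₀ : MvPowerSeries (Fin (h + 1)) k :=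
    (MvPowerSeries.X (Fin.last h) : MvPowerSeries (Fin (h + 1)) k) ^ b -
      ∏ i : Fin h, (MvPowerSeries.X i.castSucc : MvPowerSeries (Fin (h + 1)) k) ^ c i with hf₀
  -- degenerate case b = 0
  rcases Nat.eq_zero_or_pos b with hbz | hb
  · exfalso
    rcases Nat.eq_zero_or_pos h with h0 | hpos
    · subst h0
      have hcl : AddSubmonoid.closure (Set.range a) = ⊥ := by
        rw [Set.range_eq_empty, AddSubmonoid.closure_empty]
      rw [hcl] at hH
      have hset : {n : ℕ | n ∉ (⊥ : AddSubmonoid ℕ)} = {(0 : ℕ)}ᶜ := by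
        ext n; simp [AddSubmonoid.mem_bot]
      rw [hset] at hH
      exact (Set.finite_singleton (0 : ℕ)).infinite_compl hH
    · refine degen φ' hφ' (Fin.castSucc ⟨0, hpos⟩) ?_
      rw [hbz, Finsupp.single_eq_of_ne' (Fin.castSucc_lt_last (⟨0, hpos⟩ : Fin h)).ne,
        zero_mul, add_zero]
      apply Finset.sum_eq_zero
      intro i _
      rw [zero_mul, mul_zero]
  -- degenerate case aa = 0
  rcases Nat.eq_zero_or_pos aa with haaz | haa0
  · exfalso
    exact degen φ' hφ' (Fin.last h) (by
      have hz : ∀ i : Fin h, (Finsupp.single (Fin.last h) (1 : ℕ)) i.castSucc = 0 :=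
        fun i => Finsupp.single_eq_of_ne' (Fin.castSucc_lt_last i).ne'
      simp [haaz, hz])
  -- main case
  have hex : ∃ i₀, 0 < c i₀ := by
    by_contra hnone
    push_neg at hnone
    have hzero : ∑ i, c i * a i = 0 := Finset.sum_eq_zero (fun i _ => by
      have h0 : c i = 0 := Nat.le_zero.1 (hnone i)
      rw [h0, zero_mul])
    rw [← haa] at hzero
    omega
  obtain ⟨i₀, hci⟩ := hex
  set cF : Fin h →₀ ℕ := Finsupp.equivFunOnFinite.symm c with hcFdef
  have hf : f₀ = MvPowerSeries.monomial (Finsupp.single (Fin.last h) b) 1 -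
      MvPowerSeries.monomial (packF cF 0) 1 := by
    rw [hf₀, MvPowerSeries.X_pow_eq, prod_X_pow]
  have key : Ideal.map ι (RingHom.ker φ) ⊔ Ideal.span {f₀} = RingHom.ker φ' := by
    apply le_antisymm
    · apply sup_le
      · rw [Ideal.map_le_iff_le_comap]
        intro g hg
        rw [Ideal.mem_comap, RingHom.mem_ker]
        exact phi'_iota hapos hb haa0 φ hφ φ' hφ' ι hι g (RingHom.mem_ker.1 hg)
      · rw [Ideal.span_le, Set.singleton_subset_iff, SetLike.mem_coe, RingHom.mem_ker, hf,
          map_sub]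
        have h01 : resF (Finsupp.single (Fin.last h) b) = 0 := by
          ext i
          simp [Finsupp.single_eq_of_ne' (Fin.castSucc_lt_last i).ne']
        have h02 : wt a (0 : Fin h →₀ ℕ) = 0 := by simp [wt]
        have h03 : wt a cF = aa := by
          rw [wt, haa]
          exact Finset.sum_congr rfl (fun i _ => rfl)
        have hwteq : wt (wS a b aa) (Finsupp.single (Fin.last h) b) =
            wt (wS a b aa) (packF cF 0) := by
          rw [wt_wS_eq, wt_wS_eq, h01, h02, resF_packF, h03, packF_last,
            Finsupp.single_eq_same]
          ring
        rw [phi'_monomial_sub hapos hb haa0 φ' hφ' _ _ hwteq, sub_self]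
    · intro g hg
      rw [RingHom.mem_ker] at hg
      have hcF0 : 0 < cF i₀ := hci
      have hdiv := div_identity cF hcF0 b hb g
      have hNmem : Ng cF b g ∈ Ideal.map ι (RingHom.ker φ) := by
        rw [Ng_eq cF b g ι hι]
        apply Ideal.sum_mem
        intro r hr
        apply Ideal.mul_mem_left
        apply Ideal.mem_map_of_mem
        rw [RingHom.mem_ker]
        exact Gr_ker hapos haa hgcd hb haa0 hci φ hφ φ' hφ' g hg r (Finset.mem_range.1 hr)
      have hfmem : g - Ng cF b g ∈ Ideal.span {f₀} := by
        rw [Ideal.mem_span_singleton]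
        refine ⟨Qg cF b g, ?_⟩
        rw [hf]
        exact sub_eq_of_eq_add' hdiv
      have hsplit : g = Ng cF b g + (g - Ng cF b g) := by ring
      rw [hsplit]
      exact Ideal.add_mem _ (Submodule.mem_sup_left hNmem) (Submodule.mem_sup_right hfmem)
  exact ⟨(Ideal.quotEquivOfEq key).trans (RingHom.quotientKerEquivRange φ')⟩
end
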